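/- arXiv:1203.3210 — 2 statements merged into one kernel-verified Lean document; each statement's English description precedes it below -/
import Mathlib

section
/- Let A_1, B_1 be n×n real positive definite matrices, let A_2, B_2 be n×n real positive semidefinite matrices, and let w be a positive real number. Then Tr[ (A_1 − B_1)(B_1^{−1} − A_1^{−1}) + 4 (A_2 − B_2) ( (w B_1 + B_2)^{−1} − (w A_1 + A_2)^{−1} ) ] ≥ 0. -/
open Matrix

variable {n : ℕ}

lemma myPosSemidef_smul {A : Matrix (Fin n) (Fin n) ℝ} (hA : A.PosSemidef) {c : ℝ}
    (hc : 0 ≤ c) : (c • A).PosSemidef :=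
  posSemidef_iff_dotProduct_mulVec.mpr ⟨by rw [Matrix.IsHermitian, conjTranspose_smul, hA.1]; simp,
   fun x => by rw [smul_mulVec, dotProduct_smul]; exact smul_nonneg hc (hA.dotProduct_mulVec_nonneg x)⟩

lemma myPosDef_smul {A : Matrix (Fin n) (Fin n) ℝ} (hA : A.PosDef) {c : ℝ}
    (hc : 0 < c) : (c • A).PosDef :=
  posDef_iff_dotProduct_mulVec.mpr ⟨by rw [Matrix.IsHermitian, conjTranspose_smul, hA.1]; simp,
   fun x hx => by rw [smul_mulVec, dotProduct_smul]; exact smul_pos hc (hA.dotProduct_mulVec_pos hx)⟩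

lemma myTrace_nonneg {M : Matrix (Fin n) (Fin n) ℝ} (hM : M.PosSemidef) : 0 ≤ M.trace := by
  rw [Matrix.trace]
  refine Finset.sum_nonneg fun i _ => ?_
  have := hM.dotProduct_mulVec_nonneg (Pi.single i 1)
  simpa [Matrix.diag, mulVec_single, dotProduct, Pi.single_apply] using this

lemma myTrace_mul_nonneg {P Q : Matrix (Fin n) (Fin n) ℝ} (hP : P.PosSemidef)
    (hQ : Q.PosSemidef) : 0 ≤ (P * Q).trace := by
  classical
  open scoped MatrixOrder in
  obtain ⟨R, hR, -, hRR⟩ :=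
    CFC.exists_sqrt_of_isSelfAdjoint_of_quasispectrumRestricts hP.isHermitian
      (QuasispectrumRestricts.nnreal_of_nonneg hP.nonneg)
  subst hRR
  rw [mul_assoc, trace_mul_comm]
  have := hQ.mul_mul_conjTranspose_same R
  rw [← star_eq_conjTranspose, hR.star_eq] at this
  exact myTrace_nonneg this

lemma myTrace_four_sym {X Y C D : Matrix (Fin n) (Fin n) ℝ}
    (hX : X.IsHermitian) (hY : Y.IsHermitian) (hC : C.IsHermitian) (hD : D.IsHermitian) :
    (X * D * Y * C).trace = (Y * D * X * C).trace := by
  have hx : Xᵀ = X := by rw [← conjTranspose_eq_transpose_of_trivial]; exact hX.eq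
  have hy : Yᵀ = Y := by rw [← conjTranspose_eq_transpose_of_trivial]; exact hY.eq
  have hc : Cᵀ = C := by rw [← conjTranspose_eq_transpose_of_trivial]; exact hC.eq
  have hd : Dᵀ = D := by rw [← conjTranspose_eq_transpose_of_trivial]; exact hD.eq
  conv_lhs => rw [← trace_transpose]
  simp only [transpose_mul, hx, hy, hc, hd]
  rw [trace_mul_comm]
  simp [mul_assoc]

lemma myInv_diff_psd {A1 A2 : Matrix (Fin n) (Fin n) ℝ} (hA1 : A1.PosDef) (hA2 : A2.PosSemidef)
    {w : ℝ} (hw : 0 < w) : (A1⁻¹ - w • (w • A1 + A2)⁻¹).PosSemidef := by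
  have hC : (w • A1 + A2).PosDef := (myPosDef_smul hA1 hw).add_posSemidef hA2
  set C := w • A1 + A2 with hCdef
  have hdetC : IsUnit C.det := isUnit_iff_ne_zero.mpr hC.det_pos.ne'
  have hdetA : IsUnit A1.det := isUnit_iff_ne_zero.mpr hA1.det_pos.ne'
  have hCi : C * C⁻¹ = 1 := mul_nonsing_inv _ hdetC
  have hCi' : C⁻¹ * C = 1 := nonsing_inv_mul _ hdetC
  have hAi : A1 * A1⁻¹ = 1 := mul_nonsing_inv _ hdetA
  have hAi' : A1⁻¹ * A1 = 1 := nonsing_inv_mul _ hdetA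
  have cancel : ∀ X : Matrix (Fin n) (Fin n) ℝ, C⁻¹ * (C * X * C) * C⁻¹ = X := by
    intro X
    rw [show C * X * C = C * (X * C) from by rw [mul_assoc], ← mul_assoc, hCi', one_mul,
      mul_assoc, hCi, mul_one]
  have key : C * (A1⁻¹ - w • C⁻¹) * C = w • A2 + A2 * A1⁻¹ * A2 := by
    rw [Matrix.mul_sub, Matrix.sub_mul, mul_smul_comm, hCi, smul_mul_assoc, one_mul, hCdef]
    simp only [Matrix.mul_sub, Matrix.sub_mul, Matrix.add_mul, Matrix.mul_add,
      smul_mul_assoc, mul_smul_comm, hAi, hAi', hCi, hCi', smul_smul, mul_one, one_mul,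
      mul_assoc]
    module
  have hform : A1⁻¹ - w • C⁻¹ = C⁻¹ * (w • A2 + A2 * A1⁻¹ * A2) * C⁻¹ := by
    rw [← key, cancel]
  rw [hform]
  have hinner : (w • A2 + A2 * A1⁻¹ * A2).PosSemidef := by
    refine Matrix.PosSemidef.add (myPosSemidef_smul hA2 hw.le) ?_
    have := hA1.inv.posSemidef.conjTranspose_mul_mul_same A2
    rwa [hA2.1.eq] at this
  have := hinner.mul_mul_conjTranspose_same C⁻¹
  rwa [hC.inv.isHermitian.eq] at this

set_option maxHeartbeats 2000000 in
/-- Furuichi-type improved trace inequality for `K = 2`: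
`Tr[(A₁−B₁)(B₁⁻¹−A₁⁻¹) + 4(A₂−B₂)((wB₁+B₂)⁻¹ − (wA₁+A₂)⁻¹)] ≥ 0`. -/
theorem trace_ineq_two_improved (n : ℕ)
    (A1 B1 A2 B2 : Matrix (Fin n) (Fin n) ℝ)
    (hA1 : A1.PosDef) (hB1 : B1.PosDef)
    (hA2 : A2.PosSemidef) (hB2 : B2.PosSemidef)
    (w : ℝ) (hw : 0 < w) :
    0 ≤ Matrix.trace ((A1 - B1) * (B1⁻¹ - A1⁻¹) +
      (4 : ℝ) • ((A2 - B2) * ((w • B1 + B2)⁻¹ - (w • A1 + A2)⁻¹))) := by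
  have hC : (w • A1 + A2).PosDef := (myPosDef_smul hA1 hw).add_posSemidef hA2
  have hD : (w • B1 + B2).PosDef := (myPosDef_smul hB1 hw).add_posSemidef hB2
  set C := w • A1 + A2 with hCdef
  set D := w • B1 + B2 with hDdef
  set M := A1 - B1 with hMdef
  set N := C - D with hNdef
  set S := w • M - (2 : ℝ) • N with hSdef
  have hM : M.IsHermitian := hA1.1.sub hB1.1
  have hN : N.IsHermitian := hC.1.sub hD.1
  have hS : S.IsHermitian := by
    rw [Matrix.IsHermitian, hSdef, conjTranspose_sub, conjTranspose_smul, conjTranspose_smul,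
      hM.eq, hN.eq]
    simp
  -- inverse identities
  have hdA : IsUnit A1.det := isUnit_iff_ne_zero.mpr hA1.det_pos.ne'
  have hdB : IsUnit B1.det := isUnit_iff_ne_zero.mpr hB1.det_pos.ne'
  have hdC : IsUnit C.det := isUnit_iff_ne_zero.mpr hC.det_pos.ne'
  have hdD : IsUnit D.det := isUnit_iff_ne_zero.mpr hD.det_pos.ne'
  have hBA : B1⁻¹ - A1⁻¹ = B1⁻¹ * M * A1⁻¹ := by
    rw [hMdef, Matrix.mul_sub, Matrix.sub_mul, mul_assoc, mul_nonsing_inv _ hdA, mul_one,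
      nonsing_inv_mul _ hdB, one_mul]
  have hDC : D⁻¹ - C⁻¹ = D⁻¹ * N * C⁻¹ := by
    rw [hNdef, Matrix.mul_sub, Matrix.sub_mul, mul_assoc, mul_nonsing_inv _ hdC, mul_one,
      nonsing_inv_mul _ hdD, one_mul]
  have hab : A2 - B2 = N - w • M := by
    rw [hNdef, hMdef, hCdef, hDdef]
    module
  rw [hBA, hDC, hab]
  -- symmetry of the cross term
  have gsym : (M * D⁻¹ * N * C⁻¹).trace = (N * D⁻¹ * M * C⁻¹).trace :=
    myTrace_four_sym hM hN hC.inv.isHermitian hD.inv.isHermitian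
  -- nonneg pieces
  have hQ1 : (A1⁻¹ - w • C⁻¹).PosSemidef := by rw [hCdef]; exact myInv_diff_psd hA1 hA2 hw
  have hQ2 : (B1⁻¹ - w • D⁻¹).PosSemidef := by rw [hDdef]; exact myInv_diff_psd hB1 hB2 hw
  have hP1 : (M * B1⁻¹ * M).PosSemidef := by
    have := hB1.inv.posSemidef.mul_mul_conjTranspose_same M
    rwa [hM.eq] at this
  have hP2 : (M * (B1⁻¹ - w • D⁻¹) * M).PosSemidef := by
    have := hQ2.mul_mul_conjTranspose_same M
    rwa [hM.eq] at this
  have hP3 : (S * D⁻¹ * S).PosSemidef := by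
    have := hD.inv.posSemidef.mul_mul_conjTranspose_same S
    rwa [hS.eq] at this
  have h1 : 0 ≤ (M * B1⁻¹ * M * (A1⁻¹ - w • C⁻¹)).trace := myTrace_mul_nonneg hP1 hQ1
  have h2 : 0 ≤ (M * (B1⁻¹ - w • D⁻¹) * M * C⁻¹).trace :=
    myTrace_mul_nonneg hP2 hC.inv.posSemidef
  have h3 : 0 ≤ (S * D⁻¹ * S * C⁻¹).trace := myTrace_mul_nonneg hP3 hC.inv.posSemidef
  -- the key algebraic identity
  have key : Matrix.trace (M * (B1⁻¹ * M * A1⁻¹) +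
      (4 : ℝ) • ((N - w • M) * (D⁻¹ * N * C⁻¹))) =
      (M * B1⁻¹ * M * (A1⁻¹ - w • C⁻¹)).trace
        + w * (M * (B1⁻¹ - w • D⁻¹) * M * C⁻¹).trace
        + (S * D⁻¹ * S * C⁻¹).trace := by
    simp only [hSdef, Matrix.mul_sub, Matrix.sub_mul, Matrix.mul_add, Matrix.add_mul,
      smul_mul_assoc, mul_smul_comm, trace_add, trace_sub, trace_smul, smul_smul,
      smul_eq_mul, mul_assoc]
    simp only [mul_assoc] at gsym
    rw [gsym]
    ring
  rw [key]
  positivity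
end

section
/- Let N_1, ..., N_K be n×n real symmetric matrices with N_1 positive definite and N_k − N_{k−1} positive semidefinite for k = 2, ..., K, and let Q̃_1, ..., Q̃_K and Q̂_1, ..., Q̂_K be n×n real positive semidefinite matrices. Then for every n with 1 ≤ n ≤ K, the quantity T_n = Tr[ ∑_{k=1}^{n} (Q̂_k − Q̃_k) ( (N_k + ∑_{i=1}^{k} Q̃_i)^{−1} − (N_k + ∑_{i=1}^{k} Q̂_i)^{−1} ) ] satisfies T_n ≥ 0. -/
open Finset Matrix

section Aux

variable {n : ℕ}

private lemma psd_trace_nonneg {A : Matrix (Fin n) (Fin n) ℝ} (hA : A.PosSemidef) :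
    0 ≤ A.trace := by
  rw [Matrix.trace]
  refine Finset.sum_nonneg fun i _ => ?_
  have := hA.dotProduct_mulVec_nonneg (Pi.single i 1)
  simpa [Matrix.mulVec_single, Matrix.diag] using this

private lemma trace_mul_psd_nonneg {A B : Matrix (Fin n) (Fin n) ℝ}
    (hA : A.PosSemidef) (hB : B.PosSemidef) : 0 ≤ (A * B).trace := by
  obtain ⟨C, hC⟩ : ∃ C : Matrix (Fin n) (Fin n) ℝ, A = Cᴴ * C := by
    open scoped MatrixOrder in exact CStarAlgebra.nonneg_iff_eq_star_mul_self.mp hA.nonneg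
  rw [hC, Matrix.mul_assoc, Matrix.trace_mul_comm]
  exact psd_trace_nonneg (hB.mul_mul_conjTranspose_same C)

private lemma quad_trace_nonneg {X P Q : Matrix (Fin n) (Fin n) ℝ}
    (hX : X.IsHermitian) (hP : P.PosSemidef) (hQ : Q.PosSemidef) :
    0 ≤ (X * P * X * Q).trace := by
  have h1 : (X * P * X).PosSemidef := by
    have := hP.conjTranspose_mul_mul_same X
    rwa [hX.eq] at this
  exact trace_mul_psd_nonneg h1 hQ

private lemma cross_symm {X Y P Q : Matrix (Fin n) (Fin n) ℝ}
    (hX : X.IsHermitian) (hY : Y.IsHermitian) (hP : P.IsHermitian) (hQ : Q.IsHermitian) :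
    (X * P * Y * Q).trace = (Y * P * X * Q).trace := by
  have hXt : Xᵀ = X := by simpa using hX.eq
  have hYt : Yᵀ = Y := by simpa using hY.eq
  have hPt : Pᵀ = P := by simpa using hP.eq
  have hQt : Qᵀ = Q := by simpa using hQ.eq
  have h : (X * P * Y * Q)ᴴ = Q * Y * P * X := by
    simp [Matrix.conjTranspose_mul, hXt, hYt, hPt, hQt, Matrix.mul_assoc]
  calc (X * P * Y * Q).trace = (X * P * Y * Q)ᴴ.trace := by
        rw [Matrix.trace_conjTranspose]; simp
    _ = (Q * (Y * P * X)).trace := by rw [h]; simp [Matrix.mul_assoc]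
    _ = (Y * P * X * Q).trace := by rw [Matrix.trace_mul_comm]

/-- inverse is antitone on positive definite matrices -/
private lemma inv_sub_inv_psd {A B : Matrix (Fin n) (Fin n) ℝ}
    (hA : A.PosDef) (hB : B.PosDef) (hBA : (B - A).PosSemidef) :
    (A⁻¹ - B⁻¹).PosSemidef := by
  have hAd : IsUnit A.det := (Matrix.isUnit_iff_isUnit_det _).mp hA.isUnit
  have hBd : IsUnit B.det := (Matrix.isUnit_iff_isUnit_det _).mp hB.isUnit
  have hAi := Matrix.mul_nonsing_inv A hAd
  have hAi' := Matrix.nonsing_inv_mul A hAd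
  have hBi := Matrix.mul_nonsing_inv B hBd
  have hBi' := Matrix.nonsing_inv_mul B hBd
  have cA : ∀ X : Matrix (Fin n) (Fin n) ℝ, A⁻¹ * (A * X) = X := fun X => by
    rw [← Matrix.mul_assoc, hAi', Matrix.one_mul]
  have cA' : ∀ X : Matrix (Fin n) (Fin n) ℝ, A * (A⁻¹ * X) = X := fun X => by
    rw [← Matrix.mul_assoc, hAi, Matrix.one_mul]
  have cB : ∀ X : Matrix (Fin n) (Fin n) ℝ, B⁻¹ * (B * X) = X := fun X => by
    rw [← Matrix.mul_assoc, hBi', Matrix.one_mul]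
  have cB' : ∀ X : Matrix (Fin n) (Fin n) ℝ, B * (B⁻¹ * X) = X := fun X => by
    rw [← Matrix.mul_assoc, hBi, Matrix.one_mul]
  have hcanc : ∀ X : Matrix (Fin n) (Fin n) ℝ, B⁻¹ * (B * X * B) * B⁻¹ = X := fun X => by
    rw [Matrix.mul_assoc B X B, cB, Matrix.mul_assoc, hBi, Matrix.mul_one]
  have hmid : B * (A⁻¹ - B⁻¹) * B = (B - A) + (B - A) * A⁻¹ * (B - A) := by
    simp only [Matrix.mul_sub, Matrix.sub_mul, Matrix.mul_add, Matrix.add_mul,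
      Matrix.mul_assoc, cA, cA', cB, cB', hAi, hAi', hBi, hBi',
      Matrix.mul_one, Matrix.one_mul]
    abel
  have key : A⁻¹ - B⁻¹ = B⁻¹ * ((B - A) + (B - A) * A⁻¹ * (B - A)) * B⁻¹ := by
    rw [← hmid, hcanc]
  rw [key]
  have hD : (B - A).IsHermitian := hB.1.sub hA.1
  have hin : ((B - A) + (B - A) * A⁻¹ * (B - A)).PosSemidef := by
    refine hBA.add ?_
    have := hA.inv.posSemidef.conjTranspose_mul_mul_same (B - A)
    rwa [hD.eq] at this
  have := hin.conjTranspose_mul_mul_same B⁻¹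
  rwa [hB.inv.1.eq] at this

private lemma inv_sub_inv_eq {A B : Matrix (Fin n) (Fin n) ℝ}
    (hA : A.PosDef) (hB : B.PosDef) :
    A⁻¹ - B⁻¹ = A⁻¹ * (B - A) * B⁻¹ := by
  have hAd : IsUnit A.det := (Matrix.isUnit_iff_isUnit_det _).mp hA.isUnit
  have hBd : IsUnit B.det := (Matrix.isUnit_iff_isUnit_det _).mp hB.isUnit
  rw [Matrix.mul_sub, Matrix.sub_mul, Matrix.mul_assoc,
    Matrix.mul_nonsing_inv B hBd, Matrix.nonsing_inv_mul A hAd,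
    Matrix.mul_one, Matrix.one_mul]

private lemma shuffle1 (R Δ Q : Matrix (Fin n) (Fin n) ℝ) :
    (Δ * R * Δ * Q).trace = (R * (Δ * Q * Δ)).trace := by
  rw [Matrix.mul_assoc (Δ * R) Δ Q, Matrix.trace_mul_comm (Δ * R) (Δ * Q),
    Matrix.trace_mul_comm R (Δ * Q * Δ)]
  simp [Matrix.mul_assoc]

private lemma key_lemma (K : ℕ) (S T D : ℕ → Matrix (Fin n) (Fin n) ℝ)
    (hS : ∀ k, 1 ≤ k → k ≤ K → (S k).PosDef)
    (hT : ∀ k, 1 ≤ k → k ≤ K → (T k).PosDef)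
    (hSm : ∀ k, 1 ≤ k → k + 1 ≤ K → (S (k + 1) - S k).PosSemidef)
    (hTm : ∀ k, 1 ≤ k → k + 1 ≤ K → (T (k + 1) - T k).PosSemidef)
    (hD : ∀ k, 1 ≤ k → k ≤ K → T k - S k = ∑ i ∈ Finset.Icc 1 k, D i) :
    ∀ m, 1 ≤ m → m ≤ K →
      ((T m - S m) * (S m)⁻¹ * (T m - S m) * (T m)⁻¹).trace / 2 ≤
        (∑ k ∈ Finset.Icc 1 m, D k * ((S k)⁻¹ - (T k)⁻¹)).trace := by
  intro m hm
  induction m, hm using Nat.le_induction with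
  | base =>
    intro hK
    have hS1 := hS 1 le_rfl hK
    have hT1 := hT 1 le_rfl hK
    have hD1 : D 1 = T 1 - S 1 := by
      rw [hD 1 le_rfl hK]; simp
    rw [Finset.Icc_self, Finset.sum_singleton, hD1,
      inv_sub_inv_eq hS1 hT1, ← Matrix.mul_assoc, ← Matrix.mul_assoc]
    have h0 : 0 ≤ ((T 1 - S 1) * (S 1)⁻¹ * (T 1 - S 1) * (T 1)⁻¹).trace :=
      quad_trace_nonneg (hT1.1.sub hS1.1) hS1.inv.posSemidef hT1.inv.posSemidef
    linarith
  | succ m hm ih =>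
    intro hK
    have hmK : m ≤ K := le_trans (Nat.le_succ m) hK
    have ihm := ih hmK
    have hSm1 := hS m hm hmK
    have hTm1 := hT m hm hmK
    have hSs := hS (m + 1) (by omega) hK
    have hTs := hT (m + 1) (by omega) hK
    set Δ := T m - S m with hΔ
    set Δ' := T (m + 1) - S (m + 1) with hΔ'
    set P := (S (m + 1))⁻¹ with hP
    set Q := (T (m + 1))⁻¹ with hQ
    have hΔh : Δ.IsHermitian := hTm1.1.sub hSm1.1
    have hΔ'h : Δ'.IsHermitian := hTs.1.sub hSs.1
    have hPh := hSs.inv.posSemidef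
    have hQh := hTs.inv.posSemidef
    have hDsucc : D (m + 1) = Δ' - Δ := by
      rw [hΔ', hΔ, hD (m + 1) (by omega) hK, hD m hm hmK,
        Finset.sum_Icc_succ_top (by omega : 1 ≤ m + 1)]
      abel
    -- split the sum
    rw [Finset.sum_Icc_succ_top (by omega : 1 ≤ m + 1), Matrix.trace_add]
    have hterm : (D (m + 1) * ((S (m + 1))⁻¹ - (T (m + 1))⁻¹)).trace
        = (Δ' * P * Δ' * Q).trace - (Δ * P * Δ' * Q).trace := by
      rw [inv_sub_inv_eq hSs hTs, hDsucc, ← hΔ', ← hP, ← hQ, Matrix.sub_mul,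
        Matrix.trace_sub, ← Matrix.mul_assoc, ← Matrix.mul_assoc,
        ← Matrix.mul_assoc, ← Matrix.mul_assoc]
    -- cross-term bound
    have hcs : (Δ * P * Δ' * Q).trace * 2 ≤ (Δ * P * Δ * Q).trace + (Δ' * P * Δ' * Q).trace := by
      have h0 : 0 ≤ ((Δ' - Δ) * P * (Δ' - Δ) * Q).trace :=
        quad_trace_nonneg (hΔ'h.sub hΔh) hPh hQh
      have hexp : (Δ' - Δ) * P * (Δ' - Δ) * Q
          = Δ' * P * Δ' * Q - Δ' * P * Δ * Q - Δ * P * Δ' * Q + Δ * P * Δ * Q := by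
        noncomm_ring
      have hcross := cross_symm hΔ'h hΔh hPh.1 hQh.1
      rw [hexp, Matrix.trace_add, Matrix.trace_sub, Matrix.trace_sub, hcross] at h0
      linarith
    -- monotonicity in the quadratic form
    have hmono1 : (Δ * P * Δ * Q).trace ≤ (Δ * (S m)⁻¹ * Δ * Q).trace := by
      have hps : ((S m)⁻¹ - P).PosSemidef := inv_sub_inv_psd hSm1 hSs (hSm m hm hK)
      have hps2 : (Δ * Q * Δ).PosSemidef := by
        have := hQh.conjTranspose_mul_mul_same Δ
        rwa [hΔh.eq] at this
      have h0 := trace_mul_psd_nonneg hps hps2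
      rw [Matrix.sub_mul, Matrix.trace_sub] at h0
      rw [← shuffle1, ← shuffle1] at h0
      linarith
    have hmono2 : (Δ * (S m)⁻¹ * Δ * Q).trace ≤ (Δ * (S m)⁻¹ * Δ * (T m)⁻¹).trace := by
      have hps : ((T m)⁻¹ - Q).PosSemidef := inv_sub_inv_psd hTm1 hTs (hTm m hm hK)
      have hps2 : (Δ * (S m)⁻¹ * Δ).PosSemidef := by
        have := hSm1.inv.posSemidef.conjTranspose_mul_mul_same Δ
        rwa [hΔh.eq] at this
      have h0 := trace_mul_psd_nonneg hps2 hps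
      rw [Matrix.mul_sub, Matrix.trace_sub] at h0
      rw [Matrix.mul_assoc (Δ * (S m)⁻¹) Δ _, Matrix.mul_assoc (Δ * (S m)⁻¹) Δ _] at h0
      rw [Matrix.mul_assoc (Δ * (S m)⁻¹) Δ Q, Matrix.mul_assoc (Δ * (S m)⁻¹) Δ ((T m)⁻¹)]
      linarith
    rw [hterm]
    linarith

private lemma psd_sum {s : Finset ℕ} {f : ℕ → Matrix (Fin n) (Fin n) ℝ}
    (h : ∀ i ∈ s, (f i).PosSemidef) : (∑ i ∈ s, f i).PosSemidef :=
  Finset.sum_induction f Matrix.PosSemidef (fun _ _ ha hb => ha.add hb) Matrix.PosSemidef.zero h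

end Aux

/-- Each partial DSC term of the ADBC game is nonnegative:
`T_m = Tr[∑_{k=1}^{m} (Q̂ₖ − Q̃ₖ)((Nₖ + ∑_{i≤k} Q̃ᵢ)⁻¹ − (Nₖ + ∑_{i≤k} Q̂ᵢ)⁻¹)] ≥ 0`
for every `1 ≤ m ≤ K`. -/
theorem adbc_partial_term_nonneg (n K : ℕ)
    (N Qt Qh : ℕ → Matrix (Fin n) (Fin n) ℝ)
    (hNsymm : ∀ k ∈ Finset.Icc 1 K, (N k).IsSymm)
    (hN1 : (N 1).PosDef)
    (hdeg : ∀ k ∈ Finset.Icc 2 K, (N k - N (k - 1)).PosSemidef)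
    (hQt : ∀ k ∈ Finset.Icc 1 K, (Qt k).PosSemidef)
    (hQh : ∀ k ∈ Finset.Icc 1 K, (Qh k).PosSemidef) :
    ∀ m ∈ Finset.Icc 1 K,
      0 ≤ Matrix.trace (∑ k ∈ Finset.Icc 1 m,
        (Qh k - Qt k) *
          ((N k + ∑ i ∈ Finset.Icc 1 k, Qt i)⁻¹ -
           (N k + ∑ i ∈ Finset.Icc 1 k, Qh i)⁻¹)) := by
  intro m hmem
  rw [Finset.mem_Icc] at hmem
  obtain ⟨hm1, hmK⟩ := hmem
  set S : ℕ → Matrix (Fin n) (Fin n) ℝ := fun k => N k + ∑ i ∈ Finset.Icc 1 k, Qt i with hSdef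
  set T : ℕ → Matrix (Fin n) (Fin n) ℝ := fun k => N k + ∑ i ∈ Finset.Icc 1 k, Qh i with hTdef
  -- N k is PosDef for 1 ≤ k ≤ K
  have hNpd : ∀ k, 1 ≤ k → k ≤ K → (N k).PosDef := by
    intro k hk
    induction k, hk using Nat.le_induction with
    | base => intro _; exact hN1
    | succ k hk ih =>
      intro hK
      have h1 := ih (le_trans (Nat.le_succ k) hK)
      have h2 := hdeg (k + 1) (Finset.mem_Icc.mpr ⟨by omega, hK⟩)
      simp only [Nat.add_sub_cancel] at h2
      have := h1.add_posSemidef h2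
      simpa using this
  have hQt' : ∀ k, 1 ≤ k → k ≤ K → (Qt k).PosSemidef :=
    fun k h1 h2 => hQt k (Finset.mem_Icc.mpr ⟨h1, h2⟩)
  have hQh' : ∀ k, 1 ≤ k → k ≤ K → (Qh k).PosSemidef :=
    fun k h1 h2 => hQh k (Finset.mem_Icc.mpr ⟨h1, h2⟩)
  have hSpd : ∀ k, 1 ≤ k → k ≤ K → (S k).PosDef := by
    intro k h1 h2
    exact (hNpd k h1 h2).add_posSemidef (psd_sum fun i hi => by
      rw [Finset.mem_Icc] at hi; exact hQt' i hi.1 (le_trans hi.2 h2))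
  have hTpd : ∀ k, 1 ≤ k → k ≤ K → (T k).PosDef := by
    intro k h1 h2
    exact (hNpd k h1 h2).add_posSemidef (psd_sum fun i hi => by
      rw [Finset.mem_Icc] at hi; exact hQh' i hi.1 (le_trans hi.2 h2))
  have hNdiff : ∀ k, 1 ≤ k → k + 1 ≤ K → (N (k + 1) - N k).PosSemidef := by
    intro k h1 h2
    have := hdeg (k + 1) (Finset.mem_Icc.mpr ⟨by omega, h2⟩)
    simpa using this
  have hSm : ∀ k, 1 ≤ k → k + 1 ≤ K → (S (k + 1) - S k).PosSemidef := by
    intro k h1 h2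
    have heq : S (k + 1) - S k = (N (k + 1) - N k) + Qt (k + 1) := by
      simp only [hSdef]
      rw [Finset.sum_Icc_succ_top (by omega : 1 ≤ k + 1)]
      abel
    rw [heq]
    exact (hNdiff k h1 h2).add (hQt' (k + 1) (by omega) h2)
  have hTm : ∀ k, 1 ≤ k → k + 1 ≤ K → (T (k + 1) - T k).PosSemidef := by
    intro k h1 h2
    have heq : T (k + 1) - T k = (N (k + 1) - N k) + Qh (k + 1) := by
      simp only [hTdef]
      rw [Finset.sum_Icc_succ_top (by omega : 1 ≤ k + 1)]
      abel
    rw [heq]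
    exact (hNdiff k h1 h2).add (hQh' (k + 1) (by omega) h2)
  have hDsum : ∀ k, 1 ≤ k → k ≤ K →
      T k - S k = ∑ i ∈ Finset.Icc 1 k, (Qh i - Qt i) := by
    intro k _ _
    simp only [hSdef, hTdef, Finset.sum_sub_distrib]
    abel
  have hkey := key_lemma K S T (fun k => Qh k - Qt k) hSpd hTpd hSm hTm hDsum m hm1 hmK
  have hc : 0 ≤ ((T m - S m) * (S m)⁻¹ * (T m - S m) * (T m)⁻¹).trace :=
    quad_trace_nonneg ((hTpd m hm1 hmK).1.sub (hSpd m hm1 hmK).1)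
      (hSpd m hm1 hmK).inv.posSemidef (hTpd m hm1 hmK).inv.posSemidef
  calc (0:ℝ) ≤ ((T m - S m) * (S m)⁻¹ * (T m - S m) * (T m)⁻¹).trace / 2 := by linarith
    _ ≤ _ := hkey
end
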